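/- Let n ≥ 3 and let i, j be distinct indices in {1,…,n}. Then the normal subgroup of the Steinberg group St_n(ℤ) normally generated by the element h_{ij} contains the element a = h_{12}². -/

import Mathlib

namespace Steinberg

open scoped commutatorElement

/-- Generators of the Steinberg group `St_n(ℤ)`: a symbol `x_{ij}(r)` for each
pair of distinct indices `i ≠ j` in `Fin n` and each integer `r`. -/
def Gen (n : ℕ) : Type := { p : Fin n × Fin n // p.1 ≠ p.2 } × ℤ

/-- The Steinberg relations: `x_{ij}(r) x_{ij}(s) = x_{ij}(r+s)`,
`⁅x_{ij}(r), x_{jk}(s)⁆ = x_{ik}(rs)` for `i ≠ k`, and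
`⁅x_{ij}(r), x_{pq}(s)⁆ = 1` for `j ≠ p`, `i ≠ q`. -/
def rels (n : ℕ) : Set (FreeGroup (Gen n)) :=
  { w | (∃ (i j : Fin n) (h : i ≠ j) (r s : ℤ),
      w = FreeGroup.of (⟨⟨i, j⟩, h⟩, r) * FreeGroup.of (⟨⟨i, j⟩, h⟩, s) *
          (FreeGroup.of (⟨⟨i, j⟩, h⟩, r + s))⁻¹) ∨
    (∃ (i j k : Fin n) (hij : i ≠ j) (hjk : j ≠ k) (hik : i ≠ k) (r s : ℤ),
      w = ⁅FreeGroup.of ((⟨⟨i, j⟩, hij⟩ : { p : Fin n × Fin n // p.1 ≠ p.2 }), r),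
           FreeGroup.of ((⟨⟨j, k⟩, hjk⟩ : { p : Fin n × Fin n // p.1 ≠ p.2 }), s)⁆ *
          (FreeGroup.of (⟨⟨i, k⟩, hik⟩, r * s))⁻¹) ∨
    (∃ (i j p q : Fin n) (hij : i ≠ j) (hpq : p ≠ q) (r s : ℤ),
      j ≠ p ∧ i ≠ q ∧
      w = ⁅FreeGroup.of ((⟨⟨i, j⟩, hij⟩ : { p : Fin n × Fin n // p.1 ≠ p.2 }), r),
           FreeGroup.of ((⟨⟨p, q⟩, hpq⟩ : { p : Fin n × Fin n // p.1 ≠ p.2 }), s)⁆) }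

/-- The Steinberg group `St_n(ℤ)`, presented by the generators `x_{ij}(r)` and the
Steinberg relations. -/
def St (n : ℕ) : Type := PresentedGroup (rels n)

instance (n : ℕ) : Group (St n) := by unfold St; infer_instance

/-- The generator `x_{ij}(r)` of `St_n(ℤ)`. -/
def x {n : ℕ} (i j : Fin n) (h : i ≠ j) (r : ℤ) : St n :=
  PresentedGroup.of (⟨⟨i, j⟩, h⟩, r)

/-- `ω_{ij} = x_{ij}(-1) x_{ji}(1) x_{ij}(-1)`. -/
def w {n : ℕ} (i j : Fin n) (h : i ≠ j) : St n :=
  x i j h (-1) * x j i h.symm 1 * x i j h (-1)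

/-- `h_{ij} = ω_{ij} ω_{ij}`. -/
def hElt {n : ℕ} (i j : Fin n) (h : i ≠ j) : St n := w i j h * w i j h

/-- The central element `a = h_{12}²` (indices `1,2` are `⟨0,_⟩, ⟨1,_⟩ : Fin n`). -/
def aElt {n : ℕ} (hn : 3 ≤ n) : St n :=
  hElt (⟨0, by omega⟩ : Fin n) (⟨1, by omega⟩ : Fin n) (by simp [Fin.ext_iff]) ^ 2

variable {n : ℕ}

lemma mk_rels_eq_one {v : FreeGroup (Gen n)} (hv : v ∈ rels n) :
    (PresentedGroup.mk (rels n) v : St n) = 1 := by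
  have : v ∈ Subgroup.normalClosure (rels n) := Subgroup.subset_normalClosure hv
  exact (QuotientGroup.eq_one_iff v).mpr this

lemma x_add (i j : Fin n) (h : i ≠ j) (r s : ℤ) :
    x i j h r * x i j h s = x i j h (r + s) := by
  have hv : (FreeGroup.of ((⟨⟨i, j⟩, h⟩ : { p : Fin n × Fin n // p.1 ≠ p.2 }), r) *
      FreeGroup.of (⟨⟨i, j⟩, h⟩, s) * (FreeGroup.of (⟨⟨i, j⟩, h⟩, r + s))⁻¹) ∈ rels n :=
    Or.inl ⟨i, j, h, r, s, rfl⟩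
  have := mk_rels_eq_one hv
  have h2 : x i j h r * x i j h s * (x i j h (r+s))⁻¹ = 1 := this
  exact mul_inv_eq_one.mp h2

lemma x_comm2 (i j k : Fin n) (hij : i ≠ j) (hjk : j ≠ k) (hik : i ≠ k) (r s : ℤ) :
    ⁅x i j hij r, x j k hjk s⁆ = x i k hik (r * s) := by
  have hv := mk_rels_eq_one (n := n) (Or.inr (Or.inl ⟨i, j, k, hij, hjk, hik, r, s, rfl⟩))
  change ⁅x i j hij r, x j k hjk s⁆ * (x i k hik (r * s))⁻¹ = 1 at hv
  simp only [map_mul, map_inv, commutatorElement_def] at hv ⊢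
  rw [mul_inv_eq_one] at hv
  exact hv

lemma x_comm3 (i j p q : Fin n) (hij : i ≠ j) (hpq : p ≠ q) (hjp : j ≠ p) (hiq : i ≠ q)
    (r s : ℤ) : Commute (x i j hij r) (x p q hpq s) := by
  have hv := mk_rels_eq_one (n := n) (Or.inr (Or.inr ⟨i, j, p, q, hij, hpq, r, s, hjp, hiq, rfl⟩))
  change ⁅x i j hij r, x p q hpq s⁆ = 1 at hv
  exact commutatorElement_eq_one_iff_commute.mp hv

lemma x_congr (i j : Fin n) (h : i ≠ j) {r s : ℤ} (e : r = s) : x i j h r = x i j h s := by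
  rw [e]

lemma x_zero (i j : Fin n) (h : i ≠ j) : x i j h 0 = 1 := by
  have h0 := x_add i j h 0 0
  rw [add_zero] at h0
  exact mul_right_cancel (h0.trans (one_mul _).symm)

lemma x_inv (i j : Fin n) (h : i ≠ j) (r : ℤ) : (x i j h r)⁻¹ = x i j h (-r) := by
  apply inv_eq_of_mul_eq_one_right
  rw [x_add]; simpa using x_zero i j h

/-- conjugation helper -/
def cnj {G : Type*} [Group G] (g a : G) : G := g * a * g⁻¹

lemma cnj_mul {G : Type*} [Group G] (g a b : G) : cnj g (a * b) = cnj g a * cnj g b := by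
  simp only [cnj]; group

lemma cnj_cnj {G : Type*} [Group G] (g h a : G) : cnj g (cnj h a) = cnj (g * h) a := by
  simp only [cnj]; group

lemma cnj_x_comm (p q i j : Fin n) (hpq : p ≠ q) (hij : i ≠ j) (hqi : q ≠ i) (hpj : p ≠ j)
    (t r : ℤ) : cnj (x p q hpq t) (x i j hij r) = x i j hij r := by
  have h := (x_comm3 p q i j hpq hij hqi hpj t r).eq
  simp only [cnj]
  rw [h, mul_inv_cancel_right]

lemma cnj_x_left (p i j : Fin n) (hpi : p ≠ i) (hij : i ≠ j) (hpj : p ≠ j) (t r : ℤ) :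
    cnj (x p i hpi t) (x i j hij r) = x p j hpj (t * r) * x i j hij r := by
  have h := x_comm2 p i j hpi hij hpj t r
  rw [commutatorElement_def] at h
  simp only [cnj]
  rw [← h]; group

lemma cnj_x_right (i j q : Fin n) (hij : i ≠ j) (hjq : j ≠ q) (hiq : i ≠ q) (t r : ℤ) :
    cnj (x j q hjq t) (x i j hij r) = x i j hij r * x i q hiq (-r * t) := by
  have h := x_comm2 i j q hij hjq hiq (-r) t
  rw [commutatorElement_def] at h
  have hi : x i j hij (-r) = (x i j hij r)⁻¹ := by rw [x_inv]
  rw [hi] at h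
  simp only [cnj]
  rw [← h]; group

lemma cnj_w_C1 (a b c : Fin n) (hab : a ≠ b) (hac : a ≠ c) (hbc : b ≠ c) (r : ℤ) :
    cnj (w a b hab) (x a c hac r) = x b c hbc r := by
  have hw : w a b hab = x a b hab (-1) * x b a hab.symm 1 * x a b hab (-1) := rfl
  rw [hw, ← cnj_cnj, ← cnj_cnj]
  have e1 : ∀ t : ℤ, cnj (x a b hab (-1)) (x a c hac t) = x a c hac t := fun t =>
    cnj_x_comm a b a c hab hac hab.symm hac (-1) t
  have e2 : cnj (x b a hab.symm 1) (x a c hac r) = x b c hbc r * x a c hac r := by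
    rw [cnj_x_left b a c hab.symm hac hbc 1 r, x_congr b c hbc (one_mul r)]
  have e3 : cnj (x a b hab (-1)) (x b c hbc r) = x a c hac (-r) * x b c hbc r := by
    rw [cnj_x_left a b c hab hbc hac (-1) r, x_congr a c hac (show (-1)*r = -r by ring)]
  rw [e1, e2, cnj_mul, e3, e1]
  have hc := (x_comm3 b c a c hbc hac hac.symm hbc r r).eq
  rw [mul_assoc, hc, ← mul_assoc, x_add, x_congr a c hac (show -r + r = 0 by ring), x_zero, one_mul]

lemma cnj_w_C2 (a b c : Fin n) (hab : a ≠ b) (hca : c ≠ a) (hcb : c ≠ b) (r : ℤ) :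
    cnj (w a b hab) (x c a hca r) = x c b hcb r := by
  have hw : w a b hab = x a b hab (-1) * x b a hab.symm 1 * x a b hab (-1) := rfl
  rw [hw, ← cnj_cnj, ← cnj_cnj]
  have e1 : ∀ t : ℤ, cnj (x a b hab (-1)) (x c a hca t) = x c a hca t * x c b hcb t := by
    intro t
    rw [cnj_x_right c a b hca hab hcb (-1) t, x_congr c b hcb (show -t*(-1) = t by ring)]
  have e2 : cnj (x b a hab.symm 1) (x c a hca r) = x c a hca r :=
    cnj_x_comm b a c a hab.symm hca hca.symm hab.symm 1 r
  have e3 : cnj (x b a hab.symm 1) (x c b hcb r) = x c b hcb r * x c a hca (-r) := by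
    rw [cnj_x_right c b a hcb hab.symm hca 1 r, x_congr c a hca (show -r*1 = -r by ring)]
  have e4 : ∀ t : ℤ, cnj (x a b hab (-1)) (x c b hcb t) = x c b hcb t := fun t =>
    cnj_x_comm a b c b hab hcb hcb.symm hab (-1) t
  have hcom : ∀ t s : ℤ, x c a hca t * x c b hcb s = x c b hcb s * x c a hca t :=
    fun t s => (x_comm3 c a c b hca hcb hca.symm hcb t s).eq
  simp only [cnj_mul, e1, e2, e3, e4]
  rw [hcom (-r) (-r), ← mul_assoc (x c b hcb r) (x c b hcb (-r)), x_add,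
    x_congr c b hcb (show r + -r = 0 by ring), x_zero, one_mul, mul_assoc,
    ← hcom (-r) r, ← mul_assoc, x_add, x_congr c a hca (show r + -r = 0 by ring),
    x_zero, one_mul]

lemma cnj_w_w_A (i j k : Fin n) (hij : i ≠ j) (hik : i ≠ k) (hkj : k ≠ j) :
    cnj (w i k hik) (w i j hij) = w k j hkj := by
  have hw : w i j hij = x i j hij (-1) * x j i hij.symm 1 * x i j hij (-1) := rfl
  rw [hw, cnj_mul, cnj_mul,
    cnj_w_C1 i k j hik hij hkj (-1),
    cnj_w_C2 i k j hik hij.symm hkj.symm 1]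
  rfl

lemma cnj_w_w_B (i j k : Fin n) (hij : i ≠ j) (hjk : j ≠ k) (hik : i ≠ k) :
    cnj (w j k hjk) (w i j hij) = w i k hik := by
  have hw : w i j hij = x i j hij (-1) * x j i hij.symm 1 * x i j hij (-1) := rfl
  rw [hw, cnj_mul, cnj_mul,
    cnj_w_C2 j k i hjk hij hik (-1),
    cnj_w_C1 j k i hjk hij.symm hik.symm 1]
  rfl

lemma mem_move_A {N : Subgroup (St n)} (hN : N.Normal) {i j k : Fin n}
    (hij : i ≠ j) (hik : i ≠ k) (hkj : k ≠ j)
    (h : hElt i j hij ∈ N) : hElt k j hkj ∈ N := by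
  have he : hElt k j hkj = cnj (w i k hik) (hElt i j hij) := by
    show w k j hkj * w k j hkj = _
    rw [show hElt i j hij = w i j hij * w i j hij from rfl, cnj_mul,
      cnj_w_w_A i j k hij hik hkj]
  rw [he]
  exact hN.conj_mem _ h _

lemma mem_move_B {N : Subgroup (St n)} (hN : N.Normal) {i j k : Fin n}
    (hij : i ≠ j) (hjk : j ≠ k) (hik : i ≠ k)
    (h : hElt i j hij ∈ N) : hElt i k hik ∈ N := by
  have he : hElt i k hik = cnj (w j k hjk) (hElt i j hij) := by
    show w i k hik * w i k hik = _
    rw [show hElt i j hij = w i j hij * w i j hij from rfl, cnj_mul,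
      cnj_w_w_B i j k hij hjk hik]
  rw [he]
  exact hN.conj_mem _ h _

lemma exists_third (hn : 3 ≤ n) (p q : Fin n) : ∃ k : Fin n, k ≠ p ∧ k ≠ q := by
  by_contra hcon
  push_neg at hcon
  have hsub : (Finset.univ : Finset (Fin n)) ⊆ {p, q} := by
    intro k _
    rcases eq_or_ne k p with h | h
    · simp [h]
    · simp [hcon k h]
  have h1 := Finset.card_le_card hsub
  have h2 : ({p, q} : Finset (Fin n)).card ≤ 2 :=
    le_trans (Finset.card_insert_le _ _) (by simp)
  rw [Finset.card_univ, Fintype.card_fin] at h1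
  omega

lemma mem_swap {N : Subgroup (St n)} (hN : N.Normal) (hn : 3 ≤ n) {p q : Fin n}
    (hpq : p ≠ q) (h : hElt p q hpq ∈ N) : hElt q p hpq.symm ∈ N := by
  obtain ⟨k, hkp, hkq⟩ := exists_third hn p q
  have h1 : hElt k q hkq ∈ N := mem_move_A hN hpq hkp.symm hkq h
  have h2 : hElt k p hkp ∈ N := mem_move_B hN hkq hpq.symm hkp h1
  exact mem_move_A hN hkp hkq hpq.symm h2

end Steinberg

open Steinberg in
/-- For `n ≥ 3` and distinct `i,j`, the normal subgroup of `St_n(ℤ)` normally generated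
by `h_{ij}` contains `a = h_{12}²`. -/
theorem steinberg_normalClosure_h_contains_a (n : ℕ) (hn : 3 ≤ n) (i j : Fin n)
    (hij : i ≠ j) :
    aElt hn ∈ Subgroup.normalClosure ({hElt i j hij} : Set (St n)) := by
  set N := Subgroup.normalClosure ({hElt i j hij} : Set (St n)) with hNdef
  have hN : N.Normal := Subgroup.normalClosure_normal
  set i0 : Fin n := ⟨0, by omega⟩ with hi0def
  set i1 : Fin n := ⟨1, by omega⟩ with hi1def
  have h01 : i0 ≠ i1 := by simp [hi0def, hi1def, Fin.ext_iff]
  have h0 : hElt i j hij ∈ N := Subgroup.subset_normalClosure rfl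
  -- tail step: from (i0, j') to (i0, i1)
  have tail : ∀ (j' : Fin n) (h' : i0 ≠ j'), hElt i0 j' h' ∈ N → hElt i0 i1 h01 ∈ N := by
    intro j' h' hm
    rcases eq_or_ne j' i1 with rfl | hj1
    · exact hm
    · exact mem_move_B hN h' hj1 h01 hm
  have key : hElt i0 i1 h01 ∈ N := by
    rcases eq_or_ne i i0 with rfl | hi0
    · exact tail j hij h0
    · rcases eq_or_ne j i0 with rfl | hj0
      · have hs : hElt i0 i hij.symm ∈ N := mem_swap hN hn hij h0
        exact tail i hij.symm hs
      · have hm : hElt i0 j (Ne.symm hj0) ∈ N := mem_move_A hN hij hi0 (Ne.symm hj0) h0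
        exact tail j _ hm
  have ha : aElt hn = hElt i0 i1 h01 * hElt i0 i1 h01 := by
    rw [aElt, sq]
  rw [ha]
  exact N.mul_mem key key
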